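/- Let G be a group and φ : G → ℝ a group homomorphism into the additive reals. Let a, b be nonzero elements of MonoidAlgebra ℤ G. If a*b ≠ 0, then δ_φ(a*b) ≥ δ_φ(a) + δ_φ(b). Moreover, if L_φ(a) * L_φ(b) ≠ 0, then a*b ≠ 0, δ_φ(a*b) = δ_φ(a) + δ_φ(b), and L_φ(a*b) = L_φ(a) * L_φ(b). -/

import Mathlib

open scoped Classical

/-- For a nonzero `a` in the integral group ring, `deltaPhi φ a` is the minimum of `φ`
over the (finite, nonempty) support of `a`; junk value `0` for `a = 0`. -/
noncomputable def deltaPhi {G : Type*} [Group G] (φ : G → ℝ)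
    (a : MonoidAlgebra ℤ G) : ℝ :=
  if h : a.coeff.support.Nonempty then a.coeff.support.inf' h φ else 0

/-- The `φ`-leading term of `a`: the restriction of `a` to the elements `g` of its support
with `φ g = deltaPhi φ a`.  For `a = 0` this gives `0`. -/
noncomputable def leadPhi {G : Type*} [Group G] (φ : G → ℝ)
    (a : MonoidAlgebra ℤ G) : MonoidAlgebra ℤ G :=
  MonoidAlgebra.ofCoeff (Finsupp.filter (fun g => φ g = deltaPhi φ a) a.coeff)

/-- Multiplicativity properties of `δ_φ` and `L_φ` on the integral group ring. -/
theorem deltaPhi_leadPhi_mul {G : Type*} [Group G] (φ : G → ℝ)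
    (hφ : ∀ g h : G, φ (g * h) = φ g + φ h)
    (a b : MonoidAlgebra ℤ G) (ha : a ≠ 0) (hb : b ≠ 0) :
    (a * b ≠ 0 → deltaPhi φ (a * b) ≥ deltaPhi φ a + deltaPhi φ b) ∧
    (leadPhi φ a * leadPhi φ b ≠ 0 →
      a * b ≠ 0 ∧ deltaPhi φ (a * b) = deltaPhi φ a + deltaPhi φ b ∧
        leadPhi φ (a * b) = leadPhi φ a * leadPhi φ b) := by
  classical
  have hane : a.coeff.support.Nonempty := Finsupp.support_nonempty_iff.mpr (mt MonoidAlgebra.coeff_eq_zero.mp ha)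
  have hbne : b.coeff.support.Nonempty := Finsupp.support_nonempty_iff.mpr (mt MonoidAlgebra.coeff_eq_zero.mp hb)
  set da := deltaPhi φ a with hda
  set db := deltaPhi φ b with hdb
  have hdaeq : da = a.coeff.support.inf' hane φ := by rw [hda, deltaPhi, dif_pos hane]
  have hdbeq : db = b.coeff.support.inf' hbne φ := by rw [hdb, deltaPhi, dif_pos hbne]
  have hale : ∀ x ∈ a.coeff.support, da ≤ φ x := fun x hx => hdaeq ▸ Finset.inf'_le φ hx
  have hble : ∀ y ∈ b.coeff.support, db ≤ φ y := fun y hy => hdbeq ▸ Finset.inf'_le φ hy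
  have hLa : ∀ x, (leadPhi φ a).coeff x = if φ x = da then a.coeff x else 0 := by
    intro x; simp [leadPhi, MonoidAlgebra.coeff_ofCoeff, Finsupp.filter_apply]; rfl
  have hLb : ∀ y, (leadPhi φ b).coeff y = if φ y = db then b.coeff y else 0 := by
    intro y; simp [leadPhi, MonoidAlgebra.coeff_ofCoeff, Finsupp.filter_apply]; rfl
  have hsubA : (leadPhi φ a).coeff.support ⊆ a.coeff.support := by
    rw [leadPhi, MonoidAlgebra.coeff_ofCoeff, Finsupp.support_filter]; exact Finset.filter_subset _ _
  have hsubB : (leadPhi φ b).coeff.support ⊆ b.coeff.support := by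
    rw [leadPhi, MonoidAlgebra.coeff_ofCoeff, Finsupp.support_filter]; exact Finset.filter_subset _ _
  -- key coefficient identity
  have key : ∀ g : G, φ g ≤ da + db →
      (a * b).coeff g = (leadPhi φ a * leadPhi φ b).coeff g := by
    intro g hg
    rw [MonoidAlgebra.coeff_mul, MonoidAlgebra.coeff_mul]
    simp only [Finsupp.sum]
    rw [Finset.sum_subset hsubA (by
      intro x _ hx
      have : (leadPhi φ a).coeff x = 0 := Finsupp.notMem_support_iff.mp hx
      simp [this])]
    refine Finset.sum_congr rfl ?_
    intro x hx
    rw [Finset.sum_subset hsubB (by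
      intro y _ hy
      have : (leadPhi φ b).coeff y = 0 := Finsupp.notMem_support_iff.mp hy
      simp [this])]
    refine Finset.sum_congr rfl ?_
    intro y hy
    by_cases hxy : x * y = g
    · rw [if_pos hxy, if_pos hxy]
      have h1 : φ x + φ y ≤ da + db := by rw [← hφ, hxy]; exact hg
      have h2 : da ≤ φ x := hale x hx
      have h3 : db ≤ φ y := hble y hy
      have hxeq : φ x = da := by linarith
      have hyeq : φ y = db := by linarith
      rw [hLa, hLb, if_pos hxeq, if_pos hyeq]
    · rw [if_neg hxy, if_neg hxy]
  -- support of product of leading terms is pure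
  have hsupLL : ∀ g ∈ (leadPhi φ a * leadPhi φ b).coeff.support, φ g = da + db := by
    intro g hgm
    have hmem := MonoidAlgebra.support_coeff_mul_subset _ _ hgm
    rw [Finset.mem_mul] at hmem
    obtain ⟨x, hx, y, hy, rfl⟩ := hmem
    rw [leadPhi, MonoidAlgebra.coeff_ofCoeff, Finsupp.support_filter, Finset.mem_filter] at hx hy
    rw [hφ, hx.2, hy.2]
  have part1 : a * b ≠ 0 → deltaPhi φ (a * b) ≥ da + db := by
    intro hab
    have habne : (a * b).coeff.support.Nonempty := Finsupp.support_nonempty_iff.mpr (mt MonoidAlgebra.coeff_eq_zero.mp hab)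
    rw [deltaPhi, dif_pos habne]
    apply Finset.le_inf'
    intro g hg
    have hmem := MonoidAlgebra.support_coeff_mul_subset _ _ hg
    rw [Finset.mem_mul] at hmem
    obtain ⟨x, hx, y, hy, rfl⟩ := hmem
    rw [hφ]
    exact add_le_add (hale x hx) (hble y hy)
  refine ⟨part1, fun hL => ?_⟩
  obtain ⟨g₀, hg₀⟩ := Finsupp.support_nonempty_iff.mpr (mt MonoidAlgebra.coeff_eq_zero.mp hL)
  have hφg₀ : φ g₀ = da + db := hsupLL g₀ hg₀
  have hcoef := key g₀ (le_of_eq hφg₀)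
  have hg₀ab : (a * b).coeff g₀ ≠ 0 := by rw [hcoef]; exact Finsupp.mem_support_iff.mp hg₀
  have hab : a * b ≠ 0 := by
    intro h; apply hg₀ab; rw [h]; rfl
  have habne : (a * b).coeff.support.Nonempty := Finsupp.support_nonempty_iff.mpr (mt MonoidAlgebra.coeff_eq_zero.mp hab)
  have hle : deltaPhi φ (a * b) ≤ φ g₀ := by
    rw [deltaPhi, dif_pos habne]
    exact Finset.inf'_le _ (Finsupp.mem_support_iff.mpr hg₀ab)
  have heq : deltaPhi φ (a * b) = da + db := le_antisymm (hφg₀ ▸ hle) (part1 hab)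
  refine ⟨hab, heq, ?_⟩
  ext g
  have hLab : (leadPhi φ (a * b)).coeff g = if φ g = deltaPhi φ (a * b) then (a * b).coeff g else 0 := by
    simp [leadPhi, MonoidAlgebra.coeff_ofCoeff, Finsupp.filter_apply]
  rw [hLab, heq]
  by_cases hgd : φ g = da + db
  · rw [if_pos hgd]; exact key g (le_of_eq hgd)
  · rw [if_neg hgd]
    by_contra hne
    exact hgd (hsupLL g (Finsupp.mem_support_iff.mpr fun h => hne h.symm))
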